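/- Let f : ℝⁿ → ℝⁿ be continuous and locally Lipschitz, and let [a, b] ⊆ ℝⁿ be a compact interval. Suppose for every index i and every x ∈ [a, b]: if x_i = a_i then f_i(x) ≥ 0, and if x_i = b_i then f_i(x) ≤ 0. Then [a, b] is forward invariant for ẋ = f(x): every C¹ curve x : [0,∞) → ℝⁿ with x'(t) = f(x(t)) and x(0) ∈ [a, b] satisfies x(t) ∈ [a, b] for all t ≥ 0. -/

import Mathlib

open Set

lemma posSq_hasDerivAt (u : ℝ) : HasDerivAt (fun v : ℝ => max v 0 ^ 2) (2 * max u 0) u := by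
  rcases lt_trichotomy u 0 with hu | hu | hu
  · have h : (fun v : ℝ => max v 0 ^ 2) =ᶠ[nhds u] fun _ : ℝ => (0:ℝ) := by
      filter_upwards [eventually_lt_nhds hu] with v hv
      simp [max_eq_right hv.le]
    rw [max_eq_right hu.le, mul_zero]
    exact (hasDerivAt_const u (0 : ℝ)).congr_of_eventuallyEq h
  · subst hu
    rw [max_self, mul_zero]
    rw [hasDerivAt_iff_isLittleO]
    simp only [sub_zero, smul_zero, max_self, ne_eq, OfNat.ofNat_ne_zero,
      not_false_eq_true, zero_pow, sub_zero]
    rw [Asymptotics.isLittleO_iff]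
    intro c hc
    filter_upwards [Metric.eventually_nhds_iff.2 ⟨c, hc, fun {v} hv => hv⟩] with v hv
    have h1 : ‖max v 0 ^ 2‖ ≤ ‖v‖ * ‖v‖ := by
      rw [Real.norm_eq_abs, Real.norm_eq_abs, abs_pow, sq_abs, sq]
      rcases le_or_gt v 0 with h | h
      · rw [max_eq_right h]
        simpa using mul_nonneg (abs_nonneg v) (abs_nonneg v)
      · rw [max_eq_left h.le]
        exact mul_le_mul (le_abs_self v) (le_abs_self v) h.le (abs_nonneg v)
    calc ‖max v 0 ^ 2‖ ≤ ‖v‖ * ‖v‖ := h1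
      _ ≤ c * ‖v‖ := by
          apply mul_le_mul_of_nonneg_right _ (norm_nonneg _)
          simpa [Real.dist_eq, Real.norm_eq_abs] using hv.le
  · have h : (fun v : ℝ => max v 0 ^ 2) =ᶠ[nhds u] fun v : ℝ => v ^ 2 := by
      filter_upwards [eventually_gt_nhds hu] with v hv
      simp [max_eq_left hv.le]
    rw [max_eq_left hu.le]
    have := (hasDerivAt_pow 2 u).congr_of_eventuallyEq h
    simpa [mul_comm] using this

/-- (Nagumo for hyper-rectangles.) If a continuous, locally Lipschitz vector
field points into the box `[a, b]` on each of its faces, then `[a, b]` is forward invariant. -/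
theorem nagumo_box_forward_invariant {n : ℕ}
    (f : (Fin n → ℝ) → (Fin n → ℝ))
    (hf_cont : Continuous f) (hf_lip : LocallyLipschitz f)
    (a b : Fin n → ℝ) (hab : a ≤ b)
    (hface : ∀ i : Fin n, ∀ x ∈ Icc a b,
      (x i = a i → 0 ≤ f x i) ∧ (x i = b i → f x i ≤ 0)) :
    ∀ x : ℝ → Fin n → ℝ,
      (∀ t, 0 ≤ t → HasDerivAt x (f (x t)) t) →
      x 0 ∈ Icc a b → ∀ t, 0 ≤ t → x t ∈ Icc a b := by
  intro x hx hx0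
  -- the clamp (projection onto the box)
  set Q : (Fin n → ℝ) → (Fin n → ℝ) := fun y i => max (a i) (min (y i) (b i)) with hQdef
  have hQmem : ∀ y, Q y ∈ Icc a b := by
    intro y
    constructor
    · intro i; exact le_max_left _ _
    · intro i; exact max_le (hab i) (min_le_right _ _)
  have hQcont : Continuous Q := by
    apply continuous_pi
    intro i
    exact continuous_const.max ((continuous_apply i).min continuous_const)
  have hQfix : ∀ y ∈ Icc a b, Q y = y := by
    intro y hy
    funext i
    simp [hQdef, min_eq_left (hy.2 i), max_eq_right (hy.1 i)]
  have hQtop : ∀ y : Fin n → ℝ, ∀ i, b i < y i → Q y i = b i := by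
    intro y i h
    simp [hQdef, min_eq_right h.le, max_eq_right (hab i)]
  have hQbot : ∀ y : Fin n → ℝ, ∀ i, y i < a i → Q y i = a i := by
    intro y i h
    simp [hQdef, min_eq_left (h.le.trans (hab i)), max_eq_left h.le]
  -- the Lyapunov-type function measuring violation of the constraints
  set φf : (Fin n → ℝ) → ℝ :=
    fun y => ∑ i : Fin n, (max (y i - b i) 0 ^ 2 + max (a i - y i) 0 ^ 2) with hφdef
  have hφ_nonneg : ∀ y, 0 ≤ φf y := fun y => Finset.sum_nonneg fun i _ => by positivity
  have hφ_cont : Continuous φf := by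
    apply continuous_finset_sum
    intro i _
    fun_prop
  have hφ_boxzero : ∀ y ∈ Icc a b, φf y = 0 := by
    intro y hy
    apply Finset.sum_eq_zero
    intro i _
    rw [max_eq_right (by linarith [hy.2 i]), max_eq_right (by linarith [hy.1 i])]
    norm_num
  have hφ_zero : ∀ y, φf y ≤ 0 → y ∈ Icc a b := by
    intro y hy
    have heq : φf y = 0 := le_antisymm hy (hφ_nonneg y)
    have hterm := (Finset.sum_eq_zero_iff_of_nonneg (fun i _ => by positivity)).1 heq
    constructor
    · intro i
      have h := hterm i (Finset.mem_univ i)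
      have h2 : max (a i - y i) 0 = 0 := by nlinarith [le_max_right (y i - b i) (0:ℝ), le_max_right (a i - y i) (0:ℝ)]
      have := le_max_left (a i - y i) (0:ℝ)
      rw [h2] at this
      linarith
    · intro i
      have h := hterm i (Finset.mem_univ i)
      have h2 : max (y i - b i) 0 = 0 := by nlinarith [le_max_right (y i - b i) (0:ℝ), le_max_right (a i - y i) (0:ℝ)]
      have := le_max_left (y i - b i) (0:ℝ)
      rw [h2] at this
      linarith
  -- key differential inequality bound
  have key : ∀ (U : Set (Fin n → ℝ)) (C : NNReal), LipschitzOnWith C f U →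
      ∀ y, y ∈ U → Q y ∈ U →
      (∑ i : Fin n, (2 * max (y i - b i) 0 * f y i + 2 * max (a i - y i) 0 * (-(f y i))))
        ≤ (2 * n * C) * φf y := by
    intro U C hlip y hyU hQyU
    set p : Fin n → ℝ := fun i => max (y i - b i) 0 with hpdef
    set q : Fin n → ℝ := fun i => max (a i - y i) 0 with hqdef
    have hp0 : ∀ i, 0 ≤ p i := fun i => le_max_right _ _
    have hq0 : ∀ i, 0 ≤ q i := fun i => le_max_right _ _
    have habs : ∀ i, |y i - Q y i| = p i + q i := by
      intro i
      rcases lt_or_ge (b i) (y i) with h | h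
      · have hq : q i = 0 := max_eq_right (by linarith [hab i])
        rw [hQtop y i h, hq, add_zero, abs_of_pos (by linarith), hpdef]
        exact (max_eq_left (by linarith)).symm
      · have hp : p i = 0 := max_eq_right (by linarith)
        rcases lt_or_ge (y i) (a i) with h2 | h2
        · rw [hQbot y i h2, hp, zero_add, abs_of_neg (by linarith), hqdef]
          simp only
          rw [max_eq_left (by linarith)]
          ring
        · have hq : q i = 0 := max_eq_right (by linarith)
          have : Q y i = y i := by
            simp [hQdef, min_eq_left h, max_eq_right h2]
          rw [this, hp, hq, sub_self, abs_zero, add_zero]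
    have hpq0 : ∀ i, p i * q i = 0 := by
      intro i
      rcases le_or_gt (y i) (b i) with h | h
      · rw [hpdef]; simp only
        rw [max_eq_right (by linarith), zero_mul]
      · rw [hqdef]; simp only
        rw [max_eq_right (by linarith [hab i]), mul_zero]
    have hsq_le : ∀ i, (p i + q i) ^ 2 ≤ φf y := by
      intro i
      have h1 : (p i + q i) ^ 2 = p i ^ 2 + q i ^ 2 := by
        have := hpq0 i; ring_nf; nlinarith
      rw [h1]
      exact Finset.single_le_sum (f := fun i => p i ^ 2 + q i ^ 2)
        (fun i _ => by positivity) (Finset.mem_univ i)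
    have hnorm : ‖y - Q y‖ ≤ Real.sqrt (φf y) := by
      rw [pi_norm_le_iff_of_nonneg (Real.sqrt_nonneg _)]
      intro i
      have : (y - Q y) i = y i - Q y i := rfl
      rw [Real.norm_eq_abs, this, habs i]
      rw [Real.le_sqrt (by positivity) (hφ_nonneg y)]
      exact hsq_le i
    have hnorm2 : ‖y - Q y‖ ^ 2 ≤ φf y := by
      calc ‖y - Q y‖ ^ 2 ≤ Real.sqrt (φf y) ^ 2 :=
            pow_le_pow_left₀ (norm_nonneg _) hnorm 2
        _ = φf y := Real.sq_sqrt (hφ_nonneg y)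
    have hcoord : ∀ i, |f y i - f (Q y) i| ≤ C * ‖y - Q y‖ := by
      intro i
      have h1 : |f y i - f (Q y) i| = ‖(f y - f (Q y)) i‖ := by
        rw [Real.norm_eq_abs]; rfl
      rw [h1]
      calc ‖(f y - f (Q y)) i‖ ≤ ‖f y - f (Q y)‖ := norm_le_pi_norm _ i
        _ = dist (f y) (f (Q y)) := (dist_eq_norm _ _).symm
        _ ≤ C * dist y (Q y) := hlip.dist_le_mul y hyU (Q y) hQyU
        _ = C * ‖y - Q y‖ := by rw [dist_eq_norm]
    have hterm : ∀ i : Fin n,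
        2 * max (y i - b i) 0 * f y i + 2 * max (a i - y i) 0 * (-(f y i))
          ≤ 2 * C * φf y := by
      intro i
      have hfy : f y i = (f y i - f (Q y) i) + f (Q y) i := by ring
      set e : ℝ := f y i - f (Q y) i with hedef
      set g : ℝ := f (Q y) i with hgdef
      have hg1 : p i * g ≤ 0 := by
        rcases (hp0 i).eq_or_lt with h | h
        · rw [← h, zero_mul]
        · have hyb : b i < y i := by
            by_contra hc
            push_neg at hc
            have : p i = 0 := max_eq_right (by linarith)
            rw [this] at h; exact lt_irrefl 0 h
          have hQb : Q y i = b i := hQtop y i hyb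
          have := (hface i (Q y) (hQmem y)).2 hQb
          exact mul_nonpos_of_nonneg_of_nonpos (hp0 i) this
      have hg2 : q i * (-g) ≤ 0 := by
        rcases (hq0 i).eq_or_lt with h | h
        · rw [← h, zero_mul]
        · have hya : y i < a i := by
            by_contra hc
            push_neg at hc
            have : q i = 0 := max_eq_right (by linarith)
            rw [this] at h; exact lt_irrefl 0 h
          have hQa : Q y i = a i := hQbot y i hya
          have := (hface i (Q y) (hQmem y)).1 hQa
          exact mul_nonpos_of_nonneg_of_nonpos (hq0 i) (by linarith)
      have hpq_le : p i + q i ≤ ‖y - Q y‖ := by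
        rw [← habs i]
        have : (y - Q y) i = y i - Q y i := rfl
        calc |y i - Q y i| = ‖(y - Q y) i‖ := by rw [Real.norm_eq_abs, this]
          _ ≤ ‖y - Q y‖ := norm_le_pi_norm _ i
      have he_abs : |e| ≤ C * ‖y - Q y‖ := hcoord i
      have hmain : 2 * p i * f y i + 2 * q i * (-(f y i))
          = 2 * (p i - q i) * e + 2 * (p i * g) + 2 * (q i * (-g)) := by
        rw [hfy]; ring
      have h4 : 2 * (p i - q i) * e ≤ 2 * (p i + q i) * |e| := by
        have h5 : (p i - q i) * e ≤ |p i - q i| * |e| :=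
          le_trans (le_abs_self _) (le_of_eq (abs_mul _ _))
        have h6 : |p i - q i| ≤ p i + q i :=
          abs_le.2 ⟨by linarith [hp0 i, hq0 i], by linarith [hp0 i, hq0 i]⟩
        nlinarith [abs_nonneg e]
      have h7 : 2 * (p i + q i) * |e| ≤ 2 * C * φf y := by
        nlinarith [hpq_le, he_abs, hnorm2, abs_nonneg e, norm_nonneg (y - Q y),
          C.coe_nonneg, hp0 i, hq0 i]
      calc 2 * max (y i - b i) 0 * f y i + 2 * max (a i - y i) 0 * (-(f y i))
          = 2 * p i * f y i + 2 * q i * (-(f y i)) := rfl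
        _ = 2 * (p i - q i) * e + 2 * (p i * g) + 2 * (q i * (-g)) := hmain
        _ ≤ 2 * (p i + q i) * |e| := by linarith
        _ ≤ 2 * C * φf y := h7
    calc (∑ i : Fin n, (2 * max (y i - b i) 0 * f y i + 2 * max (a i - y i) 0 * (-(f y i))))
        ≤ ∑ _i : Fin n, 2 * C * φf y := Finset.sum_le_sum fun i _ => hterm i
      _ = n * (2 * C * φf y) := by
          rw [Finset.sum_const, Finset.card_univ, Fintype.card_fin, nsmul_eq_mul]
      _ = (2 * n * C) * φf y := by ring
  -- local forward invariance
  have local_inv : ∀ t0 : ℝ, 0 ≤ t0 → x t0 ∈ Icc a b →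
      ∃ δ > 0, ∀ s ∈ Icc t0 (t0 + δ), x s ∈ Icc a b := by
    intro t0 ht0 hxt0
    obtain ⟨C, U, hUnhds, hlip⟩ := hf_lip (x t0)
    have hx_cont : ContinuousAt x t0 := (hx t0 ht0).continuousAt
    have hQx : Q (x t0) = x t0 := hQfix _ hxt0
    have hV : {s : ℝ | x s ∈ U ∧ Q (x s) ∈ U} ∈ nhds t0 := by
      have h1 := hx_cont.preimage_mem_nhds hUnhds
      have h2 : U ∈ nhds (Q (x t0)) := by rwa [hQx]
      have h3 := (hQcont.continuousAt.comp hx_cont).preimage_mem_nhds h2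
      filter_upwards [h1, h3] with s hs1 hs2
      exact ⟨hs1, hs2⟩
    obtain ⟨ε, hε, hball⟩ := Metric.mem_nhds_iff.1 hV
    refine ⟨ε / 2, by positivity, ?_⟩
    have hsub : ∀ s ∈ Icc t0 (t0 + ε / 2), x s ∈ U ∧ Q (x s) ∈ U := by
      intro s hs
      apply hball
      rw [Metric.mem_ball, Real.dist_eq, abs_of_nonneg (by linarith [hs.1])]
      linarith [hs.2]
    have hφcont : ContinuousOn (fun s => φf (x s)) (Icc t0 (t0 + ε / 2)) := by
      intro s hs
      exact (hφ_cont.continuousAt.comp (hx s (le_trans ht0 hs.1)).continuousAt).continuousWithinAt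
    have hD : ∀ s ∈ Ico t0 (t0 + ε / 2), HasDerivAt (fun t => φf (x t))
        (∑ i : Fin n, (2 * max (x s i - b i) 0 * f (x s) i
          + 2 * max (a i - x s i) 0 * (-(f (x s) i)))) s := by
      intro s hs
      have hxs := hx s (le_trans ht0 hs.1)
      have hxi : ∀ i, HasDerivAt (fun t => x t i) (f (x s) i) s := fun i =>
        hasDerivAt_pi.1 hxs i
      have : HasDerivAt (fun t => ∑ i : Fin n, (max (x t i - b i) 0 ^ 2 + max (a i - x t i) 0 ^ 2))
          (∑ i : Fin n, (2 * max (x s i - b i) 0 * f (x s) i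
            + 2 * max (a i - x s i) 0 * (-(f (x s) i)))) s := by
        apply HasDerivAt.fun_sum
        intro i _
        have h1 : HasDerivAt (fun t => max (x t i - b i) 0 ^ 2)
            (2 * max (x s i - b i) 0 * f (x s) i) s := by
          have := (posSq_hasDerivAt (x s i - b i)).comp s ((hxi i).sub_const (b i))
          simpa [Function.comp_def, mul_assoc] using this
        have h2 : HasDerivAt (fun t => max (a i - x t i) 0 ^ 2)
            (2 * max (a i - x s i) 0 * (-(f (x s) i))) s := by
          have := (posSq_hasDerivAt (a i - x s i)).comp s ((hxi i).const_sub (a i))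
          simpa [Function.comp_def, mul_assoc] using this
        exact h1.add h2
      exact this
    have hbound : ∀ s ∈ Ico t0 (t0 + ε / 2),
        (∑ i : Fin n, (2 * max (x s i - b i) 0 * f (x s) i
          + 2 * max (a i - x s i) 0 * (-(f (x s) i))))
          ≤ (2 * n * C) * φf (x s) + 0 := by
      intro s hs
      have hmem := hsub s (Ico_subset_Icc_self hs)
      rw [add_zero]
      exact key U C hlip (x s) hmem.1 hmem.2
    have hφ0 : φf (x t0) ≤ 0 := le_of_eq (hφ_boxzero _ hxt0)
    have hg := le_gronwallBound_of_liminf_deriv_right_le hφcont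
      (fun s hs r hr => ((hD s hs).hasDerivWithinAt.liminf_right_slope_le hr)) hφ0 hbound
    intro s hs
    have h := hg s hs
    rw [gronwallBound_ε0_δ0] at h
    exact hφ_zero _ h
  -- glue up via continuous induction
  intro T hT
  have hclosed : IsClosed ({t : ℝ | x t ∈ Icc a b} ∩ Icc 0 T) := by
    have hcx : ContinuousOn x (Icc 0 T) := fun s hs =>
      ((hx s hs.1).continuousAt).continuousWithinAt
    have h := hcx.preimage_isClosed_of_isClosed isClosed_Icc (isClosed_Icc (a := a) (b := b))
    have heq : {t : ℝ | x t ∈ Icc a b} ∩ Icc 0 T = Icc 0 T ∩ x ⁻¹' (Icc a b) := by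
      rw [inter_comm]; rfl
    rwa [heq]
  have main : Icc (0:ℝ) T ⊆ {t : ℝ | x t ∈ Icc a b} := by
    apply IsClosed.Icc_subset_of_forall_exists_gt hclosed hx0
    intro t ht y hy
    obtain ⟨δ, hδ, hloc⟩ := local_inv t ht.2.1 ht.1
    refine ⟨min (t + δ) y, ?_, lt_min (by linarith) hy, min_le_right _ _⟩
    exact hloc _ ⟨le_min (by linarith) hy.le, min_le_left _ _⟩
  exact main ⟨hT, le_refl T⟩
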